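/- Let G be a graph with maximum degree Δ ≥ 3 containing an edge uv whose endpoints both have degree 2, with u' the other neighbor of u and v' the other neighbor of v. Let H be obtained from G by contracting uv to a vertex k. If H has an acyclic edge coloring d with Δ colors, then G has an acyclic edge coloring c with Δ colors, obtained by setting c(uu') = d(ku'), c(vv') = d(kv'), coloring uv with any third color distinct from both, and keeping all other edge colors. -/

import Mathlib

open SimpleGraph

noncomputable def edeg {V : Type*} (G : SimpleGraph V) (v : V) : ℕ :=
  {u | G.Adj v u}.ncard

def IsProperEdgeColoring {V : Type*} (G : SimpleGraph V) (c : Sym2 V → ℕ) : Prop :=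
  ∀ e₁ ∈ G.edgeSet, ∀ e₂ ∈ G.edgeSet, e₁ ≠ e₂ → (∃ v, v ∈ e₁ ∧ v ∈ e₂) → c e₁ ≠ c e₂

def IsAcyclicEdgeColoring {V : Type*} (G : SimpleGraph V) (c : Sym2 V → ℕ) : Prop :=
  IsProperEdgeColoring G c ∧
  ∀ (v : V) (w : G.Walk v v), w.IsCycle →
    ¬ ∃ α β : ℕ, ∀ e ∈ w.edges, c e = α ∨ c e = β

noncomputable def acyclicChromaticIndex {V : Type*} (G : SimpleGraph V) : ℕ :=
  sInf {n | ∃ c : Sym2 V → ℕ, IsAcyclicEdgeColoring G c ∧ ∀ e ∈ G.edgeSet, c e < n}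

private lemma cycle_two_edges {V : Type*} [DecidableEq V] {G : SimpleGraph V} {r x : V}
    (w : G.Walk r r) (hw : w.IsCycle) (hx : x ∈ w.support) :
    ∃ y z : V, y ≠ z ∧ G.Adj x y ∧ G.Adj x z ∧ s(x, y) ∈ w.edges ∧ s(x, z) ∈ w.edges := by
  have hperm := w.rotate_edges x hx
  have hc : (w.rotate x hx).IsCycle := hw.rotate hx
  set cw := w.rotate x hx with hcdef
  clear_value cw
  have hmem : ∀ e, e ∈ cw.edges → e ∈ w.edges := fun e he => hperm.perm.mem_iff.1 he
  cases cw with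
  | nil => exact absurd rfl hc.ne_nil
  | cons h p =>
    rename_i y
    rw [SimpleGraph.Walk.cons_isCycle_iff] at hc
    obtain ⟨hp, hne⟩ := hc
    obtain ⟨z, hz, q, hq⟩ := SimpleGraph.Walk.exists_eq_cons_of_ne h.ne p.reverse
    have hze : s(x, z) ∈ p.edges := by
      have : s(x, z) ∈ p.reverse.edges := by rw [hq]; simp
      rwa [SimpleGraph.Walk.edges_reverse, List.mem_reverse] at this
    refine ⟨y, z, ?_, h, hz, hmem _ (by simp), hmem _ (by simp [hze])⟩
    rintro rfl
    exact hne hze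


theorem stmt15 {V : Type*} [Fintype V] (G : SimpleGraph V) (Δ : ℕ) (hΔ : 3 ≤ Δ)
    (hmax : ∀ w : V, edeg G w ≤ Δ)
    (u v u' v' : V) (huv : G.Adj u v)
    (hNu : {x | G.Adj u x} = {v, u'}) (hNv : {x | G.Adj v x} = {u, v'})
    (hu'v : u' ≠ v) (hv'u : v' ≠ u) (hu'v' : u' ≠ v')
    (d : Sym2 V → ℕ)
    (hd : IsAcyclicEdgeColoring
      ((G.deleteEdges {s(u, v), s(v, v')}) ⊔ SimpleGraph.fromEdgeSet {s(u, v')}) d)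
    (hdcol : ∀ e ∈ ((G.deleteEdges {s(u, v), s(v, v')}) ⊔
      SimpleGraph.fromEdgeSet {s(u, v')}).edgeSet, d e < Δ) :
    ∃ c : Sym2 V → ℕ, IsAcyclicEdgeColoring G c ∧ (∀ e ∈ G.edgeSet, c e < Δ) ∧
      c s(u, u') = d s(u, u') ∧ c s(v, v') = d s(u, v') ∧
      c s(u, v) ≠ c s(u, u') ∧ c s(u, v) ≠ c s(v, v') ∧
      ∀ e ∈ G.edgeSet, e ∉ ({s(u, v), s(u, u'), s(v, v')} : Set (Sym2 V)) →
        c e = d e := by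
  classical
  set H := (G.deleteEdges {s(u, v), s(v, v')}) ⊔ SimpleGraph.fromEdgeSet {s(u, v')} with hH
  have hadj_u : ∀ x, G.Adj u x ↔ x = v ∨ x = u' := by
    intro x
    have h := Set.ext_iff.1 hNu x
    simpa using h
  have hadj_v : ∀ x, G.Adj v x ↔ x = u ∨ x = v' := by
    intro x
    have h := Set.ext_iff.1 hNv x
    simpa using h
  have huu' : G.Adj u u' := (hadj_u u').2 (Or.inr rfl)
  have hvv' : G.Adj v v' := (hadj_v v').2 (Or.inr rfl)
  have hunv : u ≠ v := huv.ne
  have hneuu' : u ≠ u' := huu'.ne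
  have hnevv' : v ≠ v' := hvv'.ne
  have hnAuv' : ¬ G.Adj u v' := by
    rw [hadj_u]
    push_neg
    exact ⟨hnevv'.symm, hu'v'.symm⟩
  -- edge distinctness
  have h1 : s(u, v) ≠ s(v, v') := by
    rw [Ne, Sym2.eq_iff]
    push_neg
    exact ⟨fun h => absurd h hunv, fun h => absurd h (Ne.symm hv'u)⟩
  have h2 : s(u, u') ≠ s(u, v) := by
    rw [Ne, Sym2.eq_iff]
    push_neg
    exact ⟨fun _ => hu'v, fun h => absurd h hunv⟩
  have h3 : s(u, u') ≠ s(v, v') := by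
    rw [Ne, Sym2.eq_iff]
    push_neg
    exact ⟨fun h => absurd h hunv, fun h => absurd h (Ne.symm hv'u)⟩
  have h4 : s(u, u') ≠ s(u, v') := by
    rw [Ne, Sym2.eq_iff]
    push_neg
    exact ⟨fun _ => hu'v', fun h => absurd h.symm hv'u⟩
  have hHedge : H.edgeSet = (G.edgeSet \ {s(u, v), s(v, v')}) ∪ {s(u, v')} := by
    rw [hH, edgeSet_sup, edgeSet_deleteEdges, edgeSet_fromEdgeSet]
    congr 1
    ext e
    simp only [Set.mem_diff, Set.mem_singleton_iff, Set.mem_setOf_eq]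
    constructor
    · rintro ⟨rfl, -⟩; rfl
    · rintro rfl
      exact ⟨rfl, by simp [Ne.symm hv'u, hu'v']⟩
  have hmemH : ∀ e, e ∈ G.edgeSet → e ≠ s(u, v) → e ≠ s(v, v') → e ∈ H.edgeSet := by
    intro e he ha hb
    rw [hHedge]
    exact Or.inl ⟨he, by simp [ha, hb]⟩
  have huu'H : s(u, u') ∈ H.edgeSet := hmemH _ (G.mem_edgeSet.2 huu') h2 h3
  have huv'H : s(u, v') ∈ H.edgeSet := by rw [hHedge]; exact Or.inr rfl
  have hab : d s(u, u') ≠ d s(u, v') :=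
    hd.1 _ huu'H _ huv'H h4 ⟨u, by simp, by simp⟩
  obtain ⟨γ, hγ3, hγa, hγb⟩ : ∃ γ, γ < 3 ∧ γ ≠ d s(u, u') ∧ γ ≠ d s(u, v') := by
    by_cases h0 : 0 = d s(u, u') ∨ 0 = d s(u, v')
    · by_cases hh1 : 1 = d s(u, u') ∨ 1 = d s(u, v')
      · exact ⟨2, by omega, by omega, by omega⟩
      · exact ⟨1, by omega, by omega, by omega⟩
    · exact ⟨0, by omega, by omega, by omega⟩
  set c : Sym2 V → ℕ := fun e =>
    if e = s(u, v) then γ else if e = s(v, v') then d s(u, v') else d e with hc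
  have hc_uv : c s(u, v) = γ := by simp [hc]
  have hc_vv' : c s(v, v') = d s(u, v') := by simp [hc, Ne.symm h1]
  have hc_other : ∀ e, e ≠ s(u, v) → e ≠ s(v, v') → c e = d e := by
    intro e ha hb
    simp [hc, ha, hb]
  have hc_uu' : c s(u, u') = d s(u, u') := hc_other _ h2 h3
  have hinc_u : ∀ e ∈ G.edgeSet, u ∈ e → e = s(u, v) ∨ e = s(u, u') := by
    intro e
    induction e using Sym2.ind with
    | _ a b =>
      intro he hue
      rw [Sym2.mem_iff] at hue
      rw [G.mem_edgeSet] at he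
      rcases hue with rfl | rfl
      · rcases (hadj_u b).1 he with h | h
        · exact Or.inl (by rw [h])
        · exact Or.inr (by rw [h])
      · rcases (hadj_u a).1 he.symm with h | h
        · exact Or.inl (by rw [h, Sym2.eq_swap])
        · exact Or.inr (by rw [h, Sym2.eq_swap])
  have hinc_v : ∀ e ∈ G.edgeSet, v ∈ e → e = s(u, v) ∨ e = s(v, v') := by
    intro e
    induction e using Sym2.ind with
    | _ a b =>
      intro he hve
      rw [Sym2.mem_iff] at hve
      rw [G.mem_edgeSet] at he
      rcases hve with rfl | rfl
      · rcases (hadj_v b).1 he with h | h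
        · exact Or.inl (by rw [h, Sym2.eq_swap])
        · exact Or.inr (by rw [h])
      · rcases (hadj_v a).1 he.symm with h | h
        · exact Or.inl (by rw [h])
        · exact Or.inr (by rw [h, Sym2.eq_swap])
  -- properness
  have hproper : IsProperEdgeColoring G c := by
    rintro e₁ he₁ e₂ he₂ hne ⟨x, hx1, hx2⟩
    by_cases H1 : e₁ = s(u, v)
    · subst H1
      rw [hc_uv]
      rw [Sym2.mem_iff] at hx1
      rcases hx1 with h | h
      · rcases hinc_u e₂ he₂ (by rw [← h]; exact hx2) with rfl | rfl
        · exact absurd rfl hne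
        · rw [hc_uu']; exact hγa
      · rcases hinc_v e₂ he₂ (by rw [← h]; exact hx2) with rfl | rfl
        · exact absurd rfl hne
        · rw [hc_vv']; exact hγb
    · by_cases H2 : e₂ = s(u, v)
      · subst H2
        rw [hc_uv]
        rw [Sym2.mem_iff] at hx2
        rcases hx2 with h | h
        · rcases hinc_u e₁ he₁ (by rw [← h]; exact hx1) with rfl | rfl
          · exact absurd rfl hne
          · rw [hc_uu']; exact hγa.symm
        · rcases hinc_v e₁ he₁ (by rw [← h]; exact hx1) with rfl | rfl
          · exact absurd rfl hne
          · rw [hc_vv']; exact hγb.symm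
      · by_cases H3 : e₁ = s(v, v')
        · subst H3
          rw [hc_vv']
          by_cases H4 : e₂ = s(v, v')
          · exact absurd H4.symm hne
          rw [hc_other _ H2 H4]
          rw [Sym2.mem_iff] at hx1
          rcases hx1 with h | h
          · rcases hinc_v e₂ he₂ (by rw [← h]; exact hx2) with rfl | rfl
            · exact absurd rfl H2
            · exact absurd rfl H4
          · have he₂H : e₂ ∈ H.edgeSet := hmemH _ he₂ H2 H4
            have hne' : s(u, v') ≠ e₂ := by
              rintro rfl
              exact hnAuv' (G.mem_edgeSet.1 he₂)
            exact hd.1 _ huv'H _ he₂H hne' ⟨v', by simp, by rw [← h]; exact hx2⟩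
        · by_cases H4 : e₂ = s(v, v')
          · subst H4
            rw [hc_vv']
            rw [hc_other _ H1 H3]
            rw [Sym2.mem_iff] at hx2
            rcases hx2 with h | h
            · rcases hinc_v e₁ he₁ (by rw [← h]; exact hx1) with rfl | rfl
              · exact absurd rfl H1
              · exact absurd rfl H3
            · have he₁H : e₁ ∈ H.edgeSet := hmemH _ he₁ H1 H3
              have hne' : s(u, v') ≠ e₁ := by
                rintro rfl
                exact hnAuv' (G.mem_edgeSet.1 he₁)
              exact (hd.1 _ huv'H _ he₁H hne' ⟨v', by simp, by rw [← h]; exact hx1⟩).symm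
          · rw [hc_other _ H1 H3, hc_other _ H2 H4]
            exact hd.1 _ (hmemH _ he₁ H1 H3) _ (hmemH _ he₂ H2 H4) hne ⟨x, hx1, hx2⟩
  -- colors < Δ
  have hcol : ∀ e ∈ G.edgeSet, c e < Δ := by
    intro e he
    by_cases H1 : e = s(u, v)
    · subst H1; rw [hc_uv]; omega
    · by_cases H2 : e = s(v, v')
      · subst H2; rw [hc_vv']; exact hdcol _ huv'H
      · rw [hc_other _ H1 H2]; exact hdcol _ (hmemH _ he H1 H2)
  -- acyclicity
  have hacyc : ∀ (r : V) (w : G.Walk r r), w.IsCycle →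
      ¬ ∃ α β : ℕ, ∀ e ∈ w.edges, c e = α ∨ c e = β := by
    intro r w hw
    rintro ⟨α, β, habc⟩
    by_cases hsup : u ∈ w.support ∨ v ∈ w.support
    · have husup : u ∈ w.support := by
        rcases hsup with h | h
        · exact h
        · obtain ⟨y, z, hyz, hy, hz, hey, hez⟩ := cycle_two_edges w hw h
          rw [hadj_v] at hy hz
          rcases hy with h' | h'
          · exact w.snd_mem_support_of_mem_edges (h' ▸ hey)
          · rcases hz with h'' | h''
            · exact w.snd_mem_support_of_mem_edges (h'' ▸ hez)
            · exact absurd (h'.trans h''.symm) hyz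
      obtain ⟨y, z, hyz, hy, hz, hey, hez⟩ := cycle_two_edges w hw husup
      rw [hadj_u] at hy hz
      have heuv : s(u, v) ∈ w.edges ∧ s(u, u') ∈ w.edges := by
        rcases hy with h | h <;> rcases hz with h' | h'
        · exact absurd (h.trans h'.symm) hyz
        · exact ⟨h ▸ hey, h' ▸ hez⟩
        · exact ⟨h' ▸ hez, h ▸ hey⟩
        · exact absurd (h.trans h'.symm) hyz
      have hvsup : v ∈ w.support := w.snd_mem_support_of_mem_edges heuv.1
      obtain ⟨y, z, hyz2, hy, hz, hey2, hez2⟩ := cycle_two_edges w hw hvsup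
      rw [hadj_v] at hy hz
      have hevv' : s(v, v') ∈ w.edges := by
        rcases hy with h | h <;> rcases hz with h' | h'
        · exact absurd (h.trans h'.symm) hyz2
        · exact h' ▸ hez2
        · exact h ▸ hey2
        · exact absurd (h.trans h'.symm) hyz2
      have c1 := habc _ heuv.1
      have c2 := habc _ heuv.2
      have c3 := habc _ hevv'
      rw [hc_uv] at c1
      rw [hc_uu'] at c2
      rw [hc_vv'] at c3
      omega
    · push_neg at hsup
      have hHe : ∀ e ∈ w.edges, e ∈ H.edgeSet := by
        intro e he
        refine hmemH e (w.edges_subset_edgeSet he) ?_ ?_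
        · rintro rfl
          exact hsup.1 (w.fst_mem_support_of_mem_edges he)
        · rintro rfl
          exact hsup.2 (w.fst_mem_support_of_mem_edges he)
      refine hd.2 r (w.transfer H hHe) (hw.transfer _) ⟨α, β, ?_⟩
      intro e he
      rw [SimpleGraph.Walk.edges_transfer] at he
      have ha : e ≠ s(u, v) := by
        rintro rfl
        exact hsup.1 (w.fst_mem_support_of_mem_edges he)
      have hb : e ≠ s(v, v') := by
        rintro rfl
        exact hsup.2 (w.fst_mem_support_of_mem_edges he)
      rw [← hc_other e ha hb]
      exact habc e he
  refine ⟨c, ⟨hproper, hacyc⟩, hcol, hc_uu', hc_vv',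
    by rw [hc_uv, hc_uu']; exact hγa, by rw [hc_uv, hc_vv']; exact hγb, ?_⟩
  intro e he hne
  simp only [Set.mem_insert_iff, Set.mem_singleton_iff, not_or] at hne
  exact hc_other e hne.1 hne.2.2
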